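/- Let m, n ≥ 0 be integers with p = 2m+n ≥ 2, and let G be a finite simple graph such that every (m,n)-colored mixed graph with underlying graph G admits a homomorphism to some (m,n)-colored mixed graph on at most k vertices (k ≥ 2). Then the acyclic chromatic number of G satisfies χ_a(G) ≤ k^{⌈log_p ⌈log_p k + k/2⌉⌉ + 1}. -/

import Mathlib

/-- The possible kinds of links from a vertex `u` to a vertex `v` in an
`(m,n)`-colored mixed graph: an arc `u → v` of one of `m` colors, an arc
`v → u` of one of `m` colors, or an (unoriented) edge of one of `n` colors. -/
inductive Link (m n : ℕ) : Type where
  | arcOut : Fin m → Link m n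
  | arcIn : Fin m → Link m n
  | edge : Fin n → Link m n

/-- The link as seen from the other endpoint. -/
def Link.flip {m n : ℕ} : Link m n → Link m n
  | .arcOut c => .arcIn c
  | .arcIn c => .arcOut c
  | .edge c => .edge c

/-- An `(m,n)`-colored mixed graph on vertex type `V`: between any two distinct
vertices there is at most one link (a colored arc in either direction or a
colored edge), and there are no loops. -/
structure CMGraph (m n : ℕ) (V : Type) where
  link : V → V → Option (Link m n)
  symm : ∀ u v, link v u = (link u v).map Link.flip
  loopless : ∀ v, link v v = none

/-- The underlying simple graph of an `(m,n)`-colored mixed graph. -/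
def CMGraph.underlying {m n : ℕ} {V : Type} (G : CMGraph m n V) : SimpleGraph V where
  Adj u v := (G.link u v).isSome
  symm := by
    constructor
    intro u v h
    rw [G.symm u v]
    rcases hx : G.link u v with _ | l
    · rw [hx] at h; simp at h
    · simp
  loopless := by
    constructor
    intro v h
    rw [G.loopless v] at h
    simp at h

/-- A homomorphism of `(m,n)`-colored mixed graphs: arcs map to arcs of the same
color and direction, edges map to edges of the same color. -/
def IsCMHom {m n : ℕ} {V W : Type} (G : CMGraph m n V) (H : CMGraph m n W)
    (f : V → W) : Prop :=
  ∀ u v l, G.link u v = some l → H.link (f u) (f v) = some l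

/-- `G` admits a homomorphism to some `(m,n)`-colored mixed graph on at most `k`
vertices, i.e. `χ_{(m,n)}(G) ≤ k`. -/
def CMChromAtMost {m n : ℕ} {V : Type} (G : CMGraph m n V) (k : ℕ) : Prop :=
  ∃ (W : Type) (inst : Fintype W) (H : CMGraph m n W) (f : V → W),
    @Fintype.card W inst ≤ k ∧ IsCMHom G H f

/-- Every `(m,n)`-colored mixed graph admitting a homomorphism from `G` has at
least `k` vertices, i.e. `χ_{(m,n)}(G) ≥ k`. -/
def CMChromAtLeast {m n : ℕ} {V : Type} (G : CMGraph m n V) (k : ℕ) : Prop :=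
  ∀ (W : Type) (inst : Fintype W) (H : CMGraph m n W) (f : V → W),
    IsCMHom G H f → k ≤ @Fintype.card W inst

/-- The acyclic chromatic number of `G` is at most `k`: there is a proper
`k`-coloring in which the union of any two color classes induces a forest. -/
def AcycChromAtMost {V : Type} (G : SimpleGraph V) (k : ℕ) : Prop :=
  ∃ c : V → Fin k, (∀ u v, G.Adj u v → c u ≠ c v) ∧
    ∀ i j : Fin k, (G.induce {v | c v = i ∨ c v = j}).IsAcyclic

/-- The edge set of `G` can be decomposed into `r` forests. -/
def ArbAtMost {V : Type} (G : SimpleGraph V) (r : ℕ) : Prop :=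
  ∃ F : Fin r → SimpleGraph V,
    (∀ i, F i ≤ G) ∧
    (∀ i, (F i).IsAcyclic) ∧
    (∀ u v, G.Adj u v → ∃ i, (F i).Adj u v) ∧
    (∀ i j, i ≠ j → ∀ u v, ¬ ((F i).Adj u v ∧ (F j).Adj u v))

/-- Every vertex of `G` has degree at most `d`. -/
def MaxDegAtMost {V : Type} (G : SimpleGraph V) (d : ℕ) : Prop :=
  ∀ v, (G.neighborSet v).ncard ≤ d

/-- `G` is `d`-degenerate: every nonempty (induced) subgraph has a vertex of
degree at most `d` in it. -/
def DegenAtMost {V : Type} (G : SimpleGraph V) (d : ℕ) : Prop :=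
  ∀ s : Set V, s.Nonempty → ∃ v ∈ s, (G.neighborSet v ∩ s).ncard ≤ d


section Aux

open Classical

variable {m n : ℕ}

@[simp] lemma Link.flip_flip (l : Link m n) : l.flip.flip = l := by
  cases l <;> rfl

lemma Link.flip_injective : Function.Injective (Link.flip (m := m) (n := n)) := by
  intro a b h
  have := congrArg Link.flip h
  simpa using this

/-- Encode `Fin (2m+n)` as link kinds. -/
def linkEnc (m n : ℕ) (i : Fin (2 * m + n)) : Link m n :=
  if h : (i : ℕ) < m then .arcOut ⟨i, h⟩
  else if h2 : (i : ℕ) < m + m then .arcIn ⟨(i : ℕ) - m, by omega⟩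
  else .edge ⟨(i : ℕ) - (m + m), by have := i.isLt; omega⟩

lemma linkEnc_injective : Function.Injective (linkEnc m n) := by
  intro a b hab
  unfold linkEnc at hab
  split_ifs at hab <;>
    simp only [Link.arcOut.injEq, Link.arcIn.injEq, Link.edge.injEq, Fin.mk.injEq] at hab <;>
    (apply Fin.ext; omega)

/-- Decode a link kind to `Fin (2m+n)`. -/
def linkDec (m n : ℕ) : Link m n → Fin (2 * m + n)
  | .arcOut c => ⟨c, by have := c.isLt; omega⟩
  | .arcIn c => ⟨m + c, by have := c.isLt; omega⟩
  | .edge c => ⟨m + m + c, by have := c.isLt; omega⟩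

lemma linkDec_injective : Function.Injective (linkDec m n) := by
  intro a b hab
  cases a <;> cases b <;>
    simp only [linkDec, Fin.mk.injEq] at hab <;>
    first
      | (congr 1; apply Fin.ext; omega)
      | (exfalso; rename_i c d; have := c.isLt; have := d.isLt; omega)

noncomputable instance : Fintype (Link m n) :=
  Fintype.ofInjective (linkDec m n) linkDec_injective

lemma card_link_le : Fintype.card (Link m n) ≤ 2 * m + n := by
  simpa using Fintype.card_le_of_injective _ linkDec_injective

end Aux
section Aux2

open Classical

variable {m n : ℕ} {V : Type}

/-- Build a colored mixed graph from a simple graph, an injective rank function and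
a symmetric letter function. -/
noncomputable def mkCM (G : SimpleGraph V) (ι : V → ℕ) (hι : Function.Injective ι)
    (q : V → V → Fin (2 * m + n)) (hq : ∀ u v, q u v = q v u) :
    CMGraph m n V where
  link u v :=
    if G.Adj u v then
      some (if ι u < ι v then linkEnc m n (q u v) else (linkEnc m n (q u v)).flip)
    else none
  symm u v := by
    by_cases h : G.Adj u v
    · rw [if_pos h, if_pos h.symm, Option.map_some]
      have hne : ι u ≠ ι v := fun hc => h.ne (hι hc)
      rcases lt_or_gt_of_ne hne with hlt | hgt
      · rw [if_neg (by omega : ¬ ι v < ι u), if_pos hlt, hq v u]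
      · rw [if_pos hgt, if_neg (by omega : ¬ ι u < ι v), hq v u, Link.flip_flip]
    · rw [if_neg h, if_neg (fun hc => h hc.symm), Option.map_none]
  loopless v := by
    rw [if_neg (G.loopless.irrefl v)]

variable {G : SimpleGraph V} {ι : V → ℕ} {hι : Function.Injective ι}
  {q : V → V → Fin (2 * m + n)} {hq : ∀ u v, q u v = q v u}

lemma mkCM_underlying : (mkCM (m := m) (n := n) G ι hι q hq).underlying = G := by
  ext u v
  simp only [CMGraph.underlying, mkCM]
  by_cases h : G.Adj u v
  · simp [h]
  · simp [h]

lemma mkCM_link_of_lt {u v : V} (h : G.Adj u v) (hlt : ι u < ι v) :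
    (mkCM (m := m) (n := n) G ι hι q hq).link u v = some (linkEnc m n (q u v)) := by
  simp only [mkCM, if_pos h, if_pos hlt]

lemma mkCM_link_of_gt {u v : V} (h : G.Adj u v) (hgt : ι v < ι u) :
    (mkCM (m := m) (n := n) G ι hι q hq).link u v = some (linkEnc m n (q u v)).flip := by
  simp only [mkCM, if_pos h, if_neg (by omega : ¬ ι u < ι v)]

lemma mkCM_link_isSome {u v : V} (h : G.Adj u v) :
    ∃ l, (mkCM (m := m) (n := n) G ι hι q hq).link u v = some l := by
  simp only [mkCM, if_pos h]
  exact ⟨_, rfl⟩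

/-- Transport the target of a homomorphism onto `Fin k`. -/
lemma CMChromAtMost.toFin {M : CMGraph m n V} {k : ℕ} (h : CMChromAtMost M k) :
    ∃ (H : CMGraph m n (Fin k)) (f : V → Fin k), IsCMHom M H f := by
  obtain ⟨W, inst, H, f, hcard, hhom⟩ := h
  obtain ⟨e⟩ : Nonempty (W ↪ Fin k) :=
    Function.Embedding.nonempty_of_card_le (by simpa using hcard)
  classical
  by_cases hW : Nonempty W
  case neg =>
    haveI : IsEmpty W := not_nonempty_iff.mp hW
    refine ⟨⟨fun _ _ => none, fun _ _ => rfl, fun _ => rfl⟩,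
      fun v => (IsEmpty.false (f v)).elim, fun u v l hl => (IsEmpty.false (f u)).elim⟩
  haveI := hW
  set inv : Fin k → W := Function.invFun e with hinv
  refine ⟨⟨fun a b => if a ∈ Set.range e ∧ b ∈ Set.range e then H.link (inv a) (inv b) else none,
      ?_, ?_⟩, e ∘ f, ?_⟩
  · intro a b
    by_cases hab : a ∈ Set.range e ∧ b ∈ Set.range e
    · rw [if_pos hab, if_pos ⟨hab.2, hab.1⟩, H.symm]
    · rw [if_neg hab, if_neg (fun hc => hab ⟨hc.2, hc.1⟩), Option.map_none]
  · intro a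
    by_cases ha : a ∈ Set.range e ∧ a ∈ Set.range e
    · rw [if_pos ha, H.loopless]
    · rw [if_neg ha]
  · intro u v l hl
    dsimp only [Function.comp]
    have hrl : ∀ w : W, inv (e w) = w := fun w => Function.leftInverse_invFun e.injective w
    rw [if_pos ⟨⟨f u, rfl⟩, ⟨f v, rfl⟩⟩, hrl, hrl]
    exact hhom u v l hl

end Aux2
section Aux3

variable {α : Type} {G' : SimpleGraph α}

open SimpleGraph

/-- From a cycle based at `x`, extract two distinct neighbors of `x` on the cycle. -/
lemma cycle_two_neighbors {x : α} (w : G'.Walk x x) (hw : w.IsCycle) :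
    ∃ y z, y ≠ z ∧ G'.Adj x y ∧ G'.Adj x z ∧ y ∈ w.support ∧ z ∈ w.support := by
  cases w with
  | nil => exact absurd rfl hw.ne_nil
  | cons h q =>
    rename_i y
    rw [SimpleGraph.Walk.cons_isCycle_iff] at hw
    obtain ⟨hq, hedge⟩ := hw
    have hxy : x ≠ y := h.ne
    obtain ⟨z, h2, q2, hq2⟩ := SimpleGraph.Walk.exists_eq_cons_of_ne hxy q.reverse
    refine ⟨y, z, ?_, h, ?_, ?_, ?_⟩
    · rintro rfl
      apply hedge
      have : s(x, y) ∈ q.reverse.edges := by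
        rw [hq2]
        simp
      simpa using this
    · have := h2.symm
      exact this.symm
    · simp [SimpleGraph.Walk.support_cons]
    · have : z ∈ q.reverse.support := by
        rw [hq2]
        simp [SimpleGraph.Walk.support_cons]
      simp only [SimpleGraph.Walk.support_reverse, List.mem_reverse] at this
      simp [SimpleGraph.Walk.support_cons, this]

end Aux3
section Aux4

open Classical Finset

variable {V : Type} [Fintype V]

lemma exists_elim_order_aux (G : SimpleGraph V) (d : ℕ) (hdeg : DegenAtMost G d)
    (s : Finset V) :
    ∃ f : V → ℕ, Set.InjOn f ↑s ∧ (∀ v ∈ s, f v < s.card) ∧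
      ∀ v ∈ s, (s.filter (fun u => G.Adj v u ∧ f u < f v)).card ≤ d := by
  classical
  induction s using Finset.strongInduction with
  | _ s ih =>
    rcases s.eq_empty_or_nonempty with rfl | hs
    · exact ⟨fun _ => 0, by simp, by simp, by simp⟩
    · obtain ⟨v, hv, hvd⟩ := hdeg ↑s (by simpa using hs)
      have hvs : v ∈ s := by simpa using hv
      obtain ⟨f', hinj', hlt', hdeg'⟩ := ih (s.erase v) (Finset.erase_ssubset hvs)
      set t := s.erase v with ht
      refine ⟨Function.update f' v t.card, ?_, ?_, ?_⟩
      · intro a ha b hb hab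
        simp only [Finset.mem_coe] at ha hb
        by_cases hav : a = v <;> by_cases hbv : b = v
        · rw [hav, hbv]
        · exfalso
          have hbt : b ∈ t := Finset.mem_erase.mpr ⟨hbv, hb⟩
          rw [hav, Function.update_self, Function.update_of_ne hbv] at hab
          exact absurd hab.symm (Nat.ne_of_lt (hlt' b hbt))
        · exfalso
          have hat : a ∈ t := Finset.mem_erase.mpr ⟨hav, ha⟩
          rw [hbv, Function.update_self, Function.update_of_ne hav] at hab
          exact absurd hab (Nat.ne_of_lt (hlt' a hat))
        · rw [Function.update_of_ne hav, Function.update_of_ne hbv] at hab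
          exact hinj' (Finset.mem_coe.mpr (Finset.mem_erase.mpr ⟨hav, ha⟩))
            (Finset.mem_coe.mpr (Finset.mem_erase.mpr ⟨hbv, hb⟩)) hab
      · intro u hu
        have hcard : t.card < s.card := Finset.card_lt_card (Finset.erase_ssubset hvs)
        by_cases huv : u = v
        · rw [huv, Function.update_self]; exact hcard
        · rw [Function.update_of_ne huv]
          exact lt_trans (hlt' u (Finset.mem_erase.mpr ⟨huv, hu⟩)) hcard
      · intro u hu
        by_cases huv : u = v
        · subst huv
          refine le_trans (Finset.card_le_card (t := s.filter (fun w => G.Adj u w)) ?_) ?_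
          · intro w hw
            simp only [Finset.mem_filter] at hw ⊢
            exact ⟨hw.1, hw.2.1⟩
          · have hset : G.neighborSet u ∩ ↑s = ↑(s.filter (fun w => G.Adj u w)) := by
              ext w
              simp [SimpleGraph.mem_neighborSet, and_comm]
            rw [hset, Set.ncard_coe_finset] at hvd
            exact hvd
        · rw [Function.update_of_ne huv]
          have hut : u ∈ t := Finset.mem_erase.mpr ⟨huv, hu⟩
          refine le_trans (Finset.card_le_card ?_) (hdeg' u hut)
          intro w hw
          simp only [Finset.mem_filter] at hw
          obtain ⟨hws, hadj, hlt⟩ := hw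
          have hwv : w ≠ v := by
            rintro rfl
            rw [Function.update_self] at hlt
            exact absurd (lt_trans (hlt' u hut) hlt) (lt_irrefl _)
          rw [Function.update_of_ne hwv] at hlt
          exact Finset.mem_filter.mpr ⟨Finset.mem_erase.mpr ⟨hwv, hws⟩, hadj, hlt⟩

lemma exists_elim_order (G : SimpleGraph V) (d : ℕ) (hdeg : DegenAtMost G d) :
    ∃ f : V → ℕ, Function.Injective f ∧
      ∀ v, (Finset.univ.filter (fun u => G.Adj v u ∧ f u < f v)).card ≤ d := by
  classical
  obtain ⟨f, hinj, _, hdg⟩ := exists_elim_order_aux G d hdeg Finset.univ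
  exact ⟨f, fun a b hab => hinj (by simp) (by simp) hab, fun v => hdg v (Finset.mem_univ v)⟩

end Aux4
section Aux5

open Classical

lemma numeric_contra {p k r S K : ℕ} (hp : 2 ≤ p) (hk : 2 ≤ k)
    (hr : Real.logb p k + (k : ℝ) / 2 ≤ (r : ℝ)) (hK : K * 2 = k * (k - 1))
    (hineq : p ^ (r * S) ≤ k ^ S * p ^ K) (hS : k + 1 ≤ S) : False := by
  have hp1 : (1 : ℝ) < (p : ℝ) := by exact_mod_cast hp
  have hk0 : (0 : ℝ) < (k : ℝ) := by positivity
  have h1 : ((p : ℝ)) ^ (r * S) ≤ (k : ℝ) ^ S * (p : ℝ) ^ K := by exact_mod_cast hineq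
  have h2 := Real.logb_le_logb_of_le hp1 (by positivity) h1
  rw [Real.logb_pow, Real.logb_mul (by positivity) (by positivity), Real.logb_pow,
    Real.logb_pow, Real.logb_self_eq_one hp1] at h2
  -- h2 : (r*S) * 1 ≤ S * logb p k + K * 1
  have hL : (0 : ℝ) ≤ Real.logb p k := Real.logb_nonneg hp1 (by exact_mod_cast (by omega : 1 ≤ k))
  have hrS : (Real.logb p k + (k : ℝ) / 2) * S ≤ (r : ℝ) * S :=
    mul_le_mul_of_nonneg_right hr (by positivity)
  have h3 : (S : ℝ) * ((k : ℝ) / 2) ≤ (K : ℝ) := by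
    push_cast at h2
    nlinarith [h2, hrS]
  have h4 : (S : ℝ) * (k : ℝ) ≤ ((K * 2 : ℕ) : ℝ) := by
    push_cast
    nlinarith [h3]
  have h5 : S * k ≤ K * 2 := by exact_mod_cast h4
  rw [hK] at h5
  have h6 : S * k ≤ (k - 1) * k := by rwa [Nat.mul_comm k (k - 1)] at h5
  have h7 : S ≤ k - 1 := Nat.le_of_mul_le_mul_right h6 (by omega)
  omega

end Aux5
section Aux6

open Classical

lemma card_ltPairs (k : ℕ) :
    Fintype.card {q : Fin k × Fin k // q.1 < q.2} * 2 = k * (k - 1) := by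
  have e : {q : Fin k × Fin k // q.1 < q.2} ≃ (Σ b : Fin k, Fin b.val) :=
    { toFun := fun q => ⟨q.val.2, ⟨q.val.1.val, q.prop⟩⟩
      invFun := fun x => ⟨(⟨x.2.val, lt_trans x.2.isLt x.1.isLt⟩, x.1), x.2.isLt⟩
      left_inv := fun q => rfl
      right_inv := fun x => rfl }
  rw [Fintype.card_congr e, Fintype.card_sigma]
  simp only [Fintype.card_fin]
  rw [Fin.sum_univ_eq_sum_range (fun i => i) k]
  exact Finset.sum_range_id_mul_two k

lemma degen_of_hyp (m n k : ℕ) (hp : 2 ≤ 2 * m + n) (hk : 2 ≤ k)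
    (V : Type) [Fintype V] (G : SimpleGraph V)
    (h : ∀ M : CMGraph m n V, M.underlying = G → CMChromAtMost M k) :
    DegenAtMost G (2 * ⌈Real.logb (2 * m + n : ℝ) (k : ℝ) + (k : ℝ) / 2⌉₊ - 1) := by
  classical
  set p := 2 * m + n with hpdef
  set r := ⌈Real.logb (p : ℝ) (k : ℝ) + (k : ℝ) / 2⌉₊ with hrdef
  intro s hsne
  by_contra hcon
  push_neg at hcon
  have hcast : ((p : ℕ) : ℝ) = (2 * (m : ℝ) + n) := by rw [hpdef]; push_cast; ring
  rw [← hcast, ← hrdef] at hcon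
  have hr_ge : Real.logb (p : ℝ) k + (k : ℝ) / 2 ≤ (r : ℝ) := Nat.le_ceil _
  have hp1 : (1 : ℝ) < (p : ℝ) := by exact_mod_cast hp
  have hlogk : (0:ℝ) ≤ Real.logb (p:ℝ) k :=
    Real.logb_nonneg hp1 (by exact_mod_cast (by omega : 1 ≤ k))
  have hrk : k ≤ 2 * r := by
    have h1 : (k : ℝ) ≤ 2 * (r : ℝ) := by linarith
    exact_mod_cast h1
  have hfin : s.Finite := Set.toFinite s
  have hnb : ∀ v ∈ s, 2 * r ≤ (G.neighborSet v ∩ s).ncard := by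
    intro v hv
    have := hcon v hv
    have hr1 : 1 ≤ r := by
      have : (1:ℝ) ≤ (r:ℝ) := by
        have : (1:ℝ) ≤ (k:ℝ)/2 := by
          have : (2:ℝ) ≤ (k:ℝ) := by exact_mod_cast hk
          linarith
        linarith
      exact_mod_cast this
    omega
  set S := s.ncard with hSdef
  have hS : k + 1 ≤ S := by
    obtain ⟨v, hv⟩ := hsne
    have h1 : (G.neighborSet v ∩ s) ⊆ s \ {v} := by
      intro u hu
      refine ⟨hu.2, ?_⟩
      simp only [Set.mem_singleton_iff]
      rintro rfl
      exact G.loopless.irrefl u hu.1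
    have h2 : (G.neighborSet v ∩ s).ncard ≤ (s \ {v}).ncard :=
      Set.ncard_le_ncard h1 hfin.diff
    have h3 : (s \ {v}).ncard = S - 1 := Set.ncard_diff_singleton_of_mem hv
    have h4 := hnb v hv
    have hS1 : 1 ≤ S := by
      have : 0 < S := (Set.ncard_pos hfin).mpr ⟨v, hv⟩
      omega
    omega
  obtain ⟨ι, hι⟩ : ∃ ι : V → ℕ, Function.Injective ι :=
    ⟨fun v => ((Fintype.equivFin V) v : ℕ),
      fun a b hab => (Fintype.equivFin V).injective (Fin.ext hab)⟩
  haveI : Fintype ↥s := Fintype.ofFinite _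
  have hcardS : Fintype.card ↥s = S := by
    rw [← Nat.card_eq_fintype_card, Nat.card_coe_set_eq]
  -- the three auxiliary types
  haveI instT : Fintype {e : Sym2 V // e ∈ G.edgeSet ∧ ∀ v ∈ e, v ∈ s} := Fintype.ofFinite _
  haveI instA : Fintype {q : V × V // G.Adj q.1 q.2 ∧ q.1 ∈ s ∧ q.2 ∈ s} := Fintype.ofFinite _
  set T := {e : Sym2 V // e ∈ G.edgeSet ∧ ∀ v ∈ e, v ∈ s} with hTdef
  set A := {q : V × V // G.Adj q.1 q.2 ∧ q.1 ∈ s ∧ q.2 ∈ s} with hAdef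
  set P := {q : Fin k × Fin k // q.1 < q.2} with hPdef
  -- Step 1 : S * (2r) ≤ card A
  have hg : ∀ v, v ∈ s → ∃ g : Fin (2 * r) → V,
      Function.Injective g ∧ ∀ i, g i ∈ G.neighborSet v ∩ s := by
    intro v hv
    haveI : Fintype ↥(G.neighborSet v ∩ s) := Fintype.ofFinite _
    have hc : Fintype.card (Fin (2 * r)) ≤ Fintype.card ↥(G.neighborSet v ∩ s) := by
      rw [Fintype.card_fin, ← Nat.card_eq_fintype_card, Nat.card_coe_set_eq]
      exact hnb v hv
    obtain ⟨e⟩ := Function.Embedding.nonempty_of_card_le hc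
    exact ⟨fun i => (e i).val, fun a b hab => e.injective (Subtype.ext hab),
      fun i => (e i).prop⟩
  choose g hginj hgmem using hg
  have hcardA : S * (2 * r) ≤ Fintype.card A := by
    have hFinj : Function.Injective (fun x : ↥s × Fin (2 * r) =>
        (⟨(x.1.val, g x.1.val x.1.prop x.2),
          (hgmem x.1.val x.1.prop x.2).1, x.1.prop, (hgmem x.1.val x.1.prop x.2).2⟩ : A)) := by
      rintro ⟨⟨v, hv⟩, i⟩ ⟨⟨v', hv'⟩, i'⟩ hab
      simp only [Subtype.mk.injEq, Prod.mk.injEq] at hab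
      obtain ⟨h1, h2⟩ := hab
      subst h1
      have h3 : i = i' := hginj v hv h2
      subst h3
      rfl
    calc S * (2 * r) = Fintype.card (↥s × Fin (2 * r)) := by
          rw [Fintype.card_prod, Fintype.card_fin, hcardS]
      _ ≤ Fintype.card A := Fintype.card_le_of_injective _ hFinj
  -- Step 2 : card A ≤ card T * 2
  have hcardAT : Fintype.card A ≤ Fintype.card T * 2 := by
    have hFinj : Function.Injective (fun a : A =>
        ((⟨s(a.val.1, a.val.2), by
          refine ⟨G.mem_edgeSet.mpr a.prop.1, ?_⟩
          intro z hz
          rcases Sym2.mem_iff.mp hz with rfl | rfl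
          exacts [a.prop.2.1, a.prop.2.2]⟩,
        decide (ι a.val.1 < ι a.val.2)) : T × Bool)) := by
      rintro ⟨⟨a1, a2⟩, ha⟩ ⟨⟨b1, b2⟩, hb⟩ hab
      simp only [Prod.mk.injEq, Subtype.mk.injEq, Subtype.ext_iff, decide_eq_decide] at hab
      obtain ⟨h1, h2⟩ := hab
      have h1' : s(a1, a2) = s(b1, b2) := congrArg Subtype.val h1
      rcases Sym2.eq_iff.mp h1' with ⟨e1, e2⟩ | ⟨e1, e2⟩
      · subst e1; subst e2; rfl
      · exfalso
        have hadj : G.Adj a1 a2 := ha.1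
        have hne : ι a1 ≠ ι a2 := fun hc => hadj.ne (hι hc)
        rw [e1, e2] at hne h2
        rcases lt_or_gt_of_ne hne with hlt | hgt
        · have := h2.mp hlt; omega
        · have := h2.mpr hgt; omega
    calc Fintype.card A ≤ Fintype.card (T × Bool) := Fintype.card_le_of_injective _ hFinj
      _ = Fintype.card T * 2 := by rw [Fintype.card_prod, Fintype.card_bool]
  have hcardT : r * S ≤ Fintype.card T := by
    have hx : S * (2 * r) = r * S * 2 := by ring
    omega
  -- Step 3 : the injection from link assignments
  set dflt : Fin p := ⟨0, by omega⟩ with hdflt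
  have memT : ∀ {a b : V}, G.Adj a b → a ∈ s → b ∈ s →
      (s(a, b) ∈ G.edgeSet ∧ ∀ z ∈ s(a, b), z ∈ s) := by
    intro a b hab ha hb
    refine ⟨G.mem_edgeSet.mpr hab, ?_⟩
    intro z hz
    rcases Sym2.mem_iff.mp hz with rfl | rfl
    exacts [ha, hb]
  set qf : (T → Fin p) → V → V → Fin p := fun σ a b =>
    if hab : G.Adj a b ∧ a ∈ s ∧ b ∈ s then σ ⟨s(a, b), memT hab.1 hab.2.1 hab.2.2⟩
    else dflt with hqf
  have hqsym : ∀ σ a b, qf σ a b = qf σ b a := by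
    intro σ a b
    by_cases hab : G.Adj a b ∧ a ∈ s ∧ b ∈ s
    · rw [hqf]
      dsimp only
      rw [dif_pos hab, dif_pos (⟨hab.1.symm, hab.2.2, hab.2.1⟩ :
        G.Adj b a ∧ b ∈ s ∧ a ∈ s)]
      exact congrArg σ (Subtype.ext (Sym2.eq_swap))
    · have hba : ¬(G.Adj b a ∧ b ∈ s ∧ a ∈ s) := fun hc => hab ⟨hc.1.symm, hc.2.2, hc.2.1⟩
      rw [hqf]
      dsimp only
      rw [dif_neg hab, dif_neg hba]
  have hhom : ∀ σ : T → Fin p, ∃ (H : CMGraph m n (Fin k)) (f : V → Fin k),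
      IsCMHom (mkCM G ι hι (qf σ) (hqsym σ)) H f := fun σ =>
    (h (mkCM G ι hι (qf σ) (hqsym σ)) mkCM_underlying).toFin
  choose HH ff hisHom using hhom
  set Ψ : (T → Fin p) → ((↥s → Fin k) × (P → Link m n)) := fun σ =>
    (fun v => ff σ v.val,
      fun pr => ((HH σ).link pr.val.1 pr.val.2).getD (linkEnc m n dflt)) with hΨdef
  have hΨ : Function.Injective Ψ := by
    intro σ σ' hσ
    have hf : ∀ v : V, v ∈ s → ff σ v = ff σ' v := fun v hv =>
      congrFun (congrArg Prod.fst hσ) ⟨v, hv⟩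
    have hH : ∀ a b : Fin k, a < b →
        ((HH σ).link a b).getD (linkEnc m n dflt) =
          ((HH σ').link a b).getD (linkEnc m n dflt) := fun a b hab =>
      congrFun (congrArg Prod.snd hσ) ⟨(a, b), hab⟩
    have key : ∀ a b : V, G.Adj a b → a ∈ s → b ∈ s → ι a < ι b →
        ∀ hmem : (s(a, b) ∈ G.edgeSet ∧ ∀ z ∈ s(a, b), z ∈ s),
        σ ⟨s(a, b), hmem⟩ = σ' ⟨s(a, b), hmem⟩ := by
      intro a b hab ha hb hlt hmem
      have hq1 : qf σ a b = σ ⟨s(a, b), hmem⟩ := by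
        rw [hqf]
        dsimp only
        rw [dif_pos (⟨hab, ha, hb⟩ : G.Adj a b ∧ a ∈ s ∧ b ∈ s)]
      have hq1' : qf σ' a b = σ' ⟨s(a, b), hmem⟩ := by
        rw [hqf]
        dsimp only
        rw [dif_pos (⟨hab, ha, hb⟩ : G.Adj a b ∧ a ∈ s ∧ b ∈ s)]
      have h2 : (HH σ).link (ff σ a) (ff σ b) = some (linkEnc m n (σ ⟨s(a, b), hmem⟩)) := by
        have := hisHom σ a b _ (mkCM_link_of_lt hab hlt)
        rwa [hq1] at this
      have h2' : (HH σ').link (ff σ' a) (ff σ' b) =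
          some (linkEnc m n (σ' ⟨s(a, b), hmem⟩)) := by
        have := hisHom σ' a b _ (mkCM_link_of_lt hab hlt)
        rwa [hq1'] at this
      have hfa := hf a ha
      have hfb := hf b hb
      have hne : ff σ a ≠ ff σ b := by
        intro hceq
        rw [hceq, (HH σ).loopless] at h2
        simp at h2
      rw [← hfa, ← hfb] at h2'
      rcases lt_or_gt_of_ne hne with hlt2 | hgt2
      · have := hH _ _ hlt2
        rw [h2, h2'] at this
        simp only [Option.getD_some] at this
        exact linkEnc_injective this
      · have := hH _ _ hgt2
        have h3 : (HH σ).link (ff σ b) (ff σ a) =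
            some (linkEnc m n (σ ⟨s(a, b), hmem⟩)).flip := by
          rw [(HH σ).symm, h2, Option.map_some]
        have h3' : (HH σ').link (ff σ b) (ff σ a) =
            some (linkEnc m n (σ' ⟨s(a, b), hmem⟩)).flip := by
          rw [(HH σ').symm, h2', Option.map_some]
        rw [h3, h3'] at this
        simp only [Option.getD_some] at this
        exact linkEnc_injective (Link.flip_injective this)
    funext x
    obtain ⟨e, he⟩ := x
    revert he
    induction e using Sym2.ind with
    | _ u v =>
      intro he
      have hadj : G.Adj u v := G.mem_edgeSet.mp he.1
      have hu : u ∈ s := he.2 u (Sym2.mem_mk_left u v)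
      have hv : v ∈ s := he.2 v (Sym2.mem_mk_right u v)
      have hne : ι u ≠ ι v := fun hc => hadj.ne (hι hc)
      rcases lt_or_gt_of_ne hne with hlt | hgt
      · exact key u v hadj hu hv hlt he
      · have hswap : (⟨s(u, v), he⟩ : T) = ⟨s(v, u), memT hadj.symm hv hu⟩ :=
          Subtype.ext (Sym2.eq_swap)
        rw [hswap]
        exact key v u hadj.symm hv hu hgt _
  -- Step 4 : cardinalities
  have hcount := Fintype.card_le_of_injective Ψ hΨ
  rw [Fintype.card_fun, Fintype.card_prod, Fintype.card_fun, Fintype.card_fun,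
    Fintype.card_fin, Fintype.card_fin, hcardS] at hcount
  have hcount2 : p ^ (r * S) ≤ k ^ S * p ^ Fintype.card P := by
    calc p ^ (r * S) ≤ p ^ Fintype.card T := Nat.pow_le_pow_right (by omega) hcardT
      _ ≤ k ^ S * Fintype.card (Link m n) ^ Fintype.card P := hcount
      _ ≤ k ^ S * p ^ Fintype.card P :=
          Nat.mul_le_mul_left _ (Nat.pow_le_pow_left card_link_le _)
  exact numeric_contra hp hk hr_ge (card_ltPairs k) hcount2 hS

end Aux6

set_option maxHeartbeats 1000000

/-- If every `(m,n)`-colored mixed graph with underlying graph `G`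
admits a homomorphism to some `(m,n)`-colored mixed graph on at most `k` vertices
(`k ≥ 2`, `p = 2m+n ≥ 2`), then `χ_a(G) ≤ k^(⌈log_p ⌈log_p k + k/2⌉⌉ + 1)`. -/
theorem acyclic_le_of_mixed_chromatic_combined (m n k : ℕ)
    (hp : 2 ≤ 2 * m + n) (hk : 2 ≤ k)
    (V : Type) [Fintype V] (G : SimpleGraph V)
    (h : ∀ M : CMGraph m n V, M.underlying = G → CMChromAtMost M k) :
    AcycChromAtMost G
      (k ^ (⌈Real.logb (2 * m + n : ℝ)
              ((⌈Real.logb (2 * m + n : ℝ) (k : ℝ) + (k : ℝ) / 2⌉₊ : ℕ) : ℝ)⌉₊ + 1)) := by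
  classical
  set p := 2 * m + n with hpdef
  have hcast : ((p : ℕ) : ℝ) = (2 * (m : ℝ) + n) := by rw [hpdef]; push_cast; ring
  set r := ⌈Real.logb (2 * (m : ℝ) + n) (k : ℝ) + (k : ℝ) / 2⌉₊ with hrdef
  set t := ⌈Real.logb (2 * (m : ℝ) + n) ((r : ℕ) : ℝ)⌉₊ + 1 with htdef
  have hp1 : (1 : ℝ) < ((p : ℕ) : ℝ) := by exact_mod_cast hp
  have hp1' : (1 : ℝ) < (2 * (m : ℝ) + n) := by rw [← hcast]; exact hp1
  have hr1 : 1 ≤ r := by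
    rw [hrdef, Nat.one_le_ceil_iff]
    have hlog : (0 : ℝ) ≤ Real.logb (2 * (m : ℝ) + n) (k : ℝ) :=
      Real.logb_nonneg hp1' (by exact_mod_cast (by omega : 1 ≤ k))
    have : (2 : ℝ) ≤ (k : ℝ) := by exact_mod_cast hk
    linarith
  set d := 2 * r - 1 with hddef
  have hd1 : 1 ≤ d := by omega
  -- d ≤ p ^ t
  have ht0 : 0 < t := by rw [htdef]; omega
  have hdpt : d ≤ p ^ t := by
    have hc1 : (r : ℝ) ≤ ((p : ℕ) : ℝ) ^ (t - 1 : ℕ) := by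
      have h1 : Real.logb (2 * (m : ℝ) + n) ((r : ℕ) : ℝ) ≤ ((t - 1 : ℕ) : ℝ) := by
        rw [htdef]
        simp only [Nat.add_sub_cancel]
        exact Nat.le_ceil _
      have h2 : ((p : ℕ) : ℝ) ^ (Real.logb (2 * (m : ℝ) + n) ((r : ℕ) : ℝ)) ≤
          ((p : ℕ) : ℝ) ^ (((t - 1 : ℕ) : ℝ)) := by
        apply (Real.rpow_le_rpow_left_iff hp1).mpr h1
      rw [Real.rpow_natCast] at h2
      have h3 : ((p : ℕ) : ℝ) ^ (Real.logb (2 * (m : ℝ) + n) ((r : ℕ) : ℝ)) = (r : ℝ) := by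
        rw [hcast]
        exact Real.rpow_logb (by linarith) (by linarith) (by exact_mod_cast hr1)
      rwa [h3] at h2
    have hc2 : r ≤ p ^ (t - 1) := by exact_mod_cast hc1
    have hc3 : 2 * p ^ (t - 1) ≤ p * p ^ (t - 1) := Nat.mul_le_mul_right _ hp
    have hc4 : p ^ t = p * p ^ (t - 1) := by
      rw [htdef]
      simp only [Nat.add_sub_cancel]
      rw [pow_succ]
      ring
    omega
  -- degeneracy and elimination order
  have hdegen : DegenAtMost G d := by
    have := degen_of_hyp m n k hp hk V G h
    convert this using 2
  obtain ⟨ord, hord, hback⟩ := exists_elim_order G d hdegen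
  -- index maps
  have hBcard : ∀ v : V, (Finset.univ.filter (fun u => G.Adj v u ∧ ord u < ord v)).card ≤ d :=
    hback
  have hgi : ∀ v : V, ∃ gi : V → Fin d,
      ∀ u1, (G.Adj v u1 ∧ ord u1 < ord v) → ∀ u2, (G.Adj v u2 ∧ ord u2 < ord v) →
        gi u1 = gi u2 → u1 = u2 := by
    intro v
    set B := Finset.univ.filter (fun u => G.Adj v u ∧ ord u < ord v) with hB
    have hcard : Fintype.card ↥B ≤ Fintype.card (Fin d) := by
      rw [Fintype.card_coe, Fintype.card_fin]
      exact hBcard v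
    obtain ⟨e⟩ := Function.Embedding.nonempty_of_card_le hcard
    refine ⟨fun u => if hu : u ∈ B then e ⟨u, hu⟩ else ⟨0, by omega⟩, ?_⟩
    intro u1 h1 u2 h2 heq
    have hu1 : u1 ∈ B := by simp [hB, h1.1, h1.2]
    have hu2 : u2 ∈ B := by simp [hB, h2.1, h2.2]
    simp only [dif_pos hu1, dif_pos hu2] at heq
    exact Subtype.ext_iff.mp (e.injective heq)
  choose gIdx hgIdx using hgi
  -- symmetric edge index
  set idx : V → V → Fin d := fun a b => if ord a < ord b then gIdx b a else gIdx a b with hidx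
  have hidxsymm : ∀ a b, idx a b = idx b a := by
    intro a b
    rw [hidx]
    dsimp only
    rcases lt_trichotomy (ord a) (ord b) with hlt | heq | hgt
    · rw [if_pos hlt, if_neg (by omega)]
    · have : a = b := hord heq
      subst this
      rfl
    · rw [if_neg (by omega), if_pos hgt]
  -- digit embedding
  obtain ⟨D⟩ : Nonempty (Fin d ↪ (Fin t → Fin p)) := by
    apply Function.Embedding.nonempty_of_card_le
    rw [Fintype.card_fin, Fintype.card_fun, Fintype.card_fin, Fintype.card_fin]
    exact hdpt
  -- the t colored mixed graphs and homomorphisms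
  have hhom : ∀ j : Fin t, ∃ (H : CMGraph m n (Fin k)) (f : V → Fin k),
      IsCMHom (mkCM G ord hord (fun a b => D (idx a b) j)
        (fun a b => by simp only [hidxsymm a b])) H f := fun j =>
    (h _ mkCM_underlying).toFin
  choose HH ff hisHom using hhom
  -- the coloring
  refine ⟨fun v => finFunctionFinEquiv (fun j : Fin t => ff j v), ?_, ?_⟩
  · -- properness
    intro u v huv hc
    have hj := congrFun (finFunctionFinEquiv.injective hc) ⟨0, ht0⟩
    set j : Fin t := ⟨0, ht0⟩
    obtain ⟨l, hl⟩ := mkCM_link_isSome (m := m) (n := n) (G := G) (ι := ord) (hι := hord)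
      (q := fun a b => D (idx a b) j) (hq := fun a b => by simp only [hidxsymm a b]) huv
    have := hisHom j u v l hl
    rw [hj, (HH j).loopless] at this
    simp at this
  · -- acyclicity
    intro i0 j0
    intro x0 w hw
    set c : V → _ := fun v => finFunctionFinEquiv (fun j : Fin t => ff j v) with hc
    set Sset := {v | c v = i0 ∨ c v = j0} with hSset
    -- maximum vertex of the cycle
    have hne : w.support ≠ [] := by simp [SimpleGraph.Walk.support_ne_nil]
    obtain ⟨x, hxmem, hxmax⟩ : ∃ x ∈ w.support, ∀ y ∈ w.support, ord y.val ≤ ord x.val := by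
      have hne' : w.support.toFinset.Nonempty := by
        simp [List.toFinset_nonempty_iff, hne]
      obtain ⟨x, hx1, hx2⟩ := Finset.exists_max_image w.support.toFinset (fun z => ord z.val) hne'
      exact ⟨x, List.mem_toFinset.mp hx1, fun y hy => hx2 y (List.mem_toFinset.mpr hy)⟩
    set w' := w.rotate x hxmem with hw'def
    have hw' := hw.rotate hxmem
    have hsubsup : ∀ y, y ∈ w'.support → y ∈ w.support := by
      intro y hy
      have hrot := SimpleGraph.Walk.support_rotate w x hxmem
      rw [SimpleGraph.Walk.support_eq_cons w'] at hy
      rcases List.mem_cons.mp hy with rfl | hy'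
      · exact hxmem
      · have : y ∈ w.support.tail := (hrot.mem_iff).mp hy'
        have h2 := SimpleGraph.Walk.support_eq_cons w
        rw [h2]
        exact List.mem_cons_of_mem _ this
    obtain ⟨y, z, hyz, hxy, hxz, hymem, hzmem⟩ := cycle_two_neighbors w' hw'
    -- adjacency in G and ord bounds
    have hxyG : G.Adj x.val y.val := hxy
    have hxzG : G.Adj x.val z.val := hxz
    have hyx : ord y.val < ord x.val := by
      have hle := hxmax y (hsubsup y hymem)
      have : y.val ≠ x.val := fun hc => hxy.ne' (Subtype.ext hc)
      have : ord y.val ≠ ord x.val := fun hc => this (hord hc)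
      omega
    have hzx : ord z.val < ord x.val := by
      have hle := hxmax z (hsubsup z hzmem)
      have : z.val ≠ x.val := fun hc => hxz.ne' (Subtype.ext hc)
      have : ord z.val ≠ ord x.val := fun hc => this (hord hc)
      omega
    -- colors of y and z agree
    have hcyx : c y.val ≠ c x.val := by
      intro hc'
      have hj := congrFun (finFunctionFinEquiv.injective hc') ⟨0, ht0⟩
      set j : Fin t := ⟨0, ht0⟩
      obtain ⟨l, hl⟩ := mkCM_link_isSome (m := m) (n := n) (G := G) (ι := ord) (hι := hord)
        (q := fun a b => D (idx a b) j) (hq := fun a b => by simp only [hidxsymm a b]) hxyG.symm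
      have := hisHom j y.val x.val l hl
      rw [hj, (HH j).loopless] at this
      simp at this
    have hczx : c z.val ≠ c x.val := by
      intro hc'
      have hj := congrFun (finFunctionFinEquiv.injective hc') ⟨0, ht0⟩
      set j : Fin t := ⟨0, ht0⟩
      obtain ⟨l, hl⟩ := mkCM_link_isSome (m := m) (n := n) (G := G) (ι := ord) (hι := hord)
        (q := fun a b => D (idx a b) j) (hq := fun a b => by simp only [hidxsymm a b]) hxzG.symm
      have := hisHom j z.val x.val l hl
      rw [hj, (HH j).loopless] at this
      simp at this
    have hycol : c y.val = i0 ∨ c y.val = j0 := y.prop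
    have hzcol : c z.val = i0 ∨ c z.val = j0 := z.prop
    have hxcol : c x.val = i0 ∨ c x.val = j0 := x.prop
    have hyzcol : c y.val = c z.val := by
      rcases hxcol with h3 | h3
      · have hy2 : c y.val = j0 := by
          rcases hycol with h1 | h1
          · exact absurd (h1.trans h3.symm) hcyx
          · exact h1
        have hz2 : c z.val = j0 := by
          rcases hzcol with h1 | h1
          · exact absurd (h1.trans h3.symm) hczx
          · exact h1
        rw [hy2, hz2]
      · have hy2 : c y.val = i0 := by
          rcases hycol with h1 | h1
          · exact h1
          · exact absurd (h1.trans h3.symm) hcyx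
        have hz2 : c z.val = i0 := by
          rcases hzcol with h1 | h1
          · exact h1
          · exact absurd (h1.trans h3.symm) hczx
        rw [hy2, hz2]
    have hffyz : ∀ j : Fin t, ff j y.val = ff j z.val := by
      intro j
      exact congrFun (finFunctionFinEquiv.injective hyzcol) j
    -- links from x to y and z coincide, forcing y = z
    have hDj : ∀ j : Fin t, D (gIdx x.val y.val) j = D (gIdx x.val z.val) j := by
      intro j
      have hq1 : idx x.val y.val = gIdx x.val y.val := by
        rw [hidx]
        dsimp only
        rw [if_neg (by omega)]
      have hq2 : idx x.val z.val = gIdx x.val z.val := by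
        rw [hidx]
        dsimp only
        rw [if_neg (by omega)]
      have hl1 : (mkCM G ord hord (fun a b => D (idx a b) j)
          (fun a b => by simp only [hidxsymm a b])).link x.val y.val =
          some (linkEnc m n (D (idx x.val y.val) j)).flip :=
        mkCM_link_of_gt hxyG hyx
      have hl2 : (mkCM G ord hord (fun a b => D (idx a b) j)
          (fun a b => by simp only [hidxsymm a b])).link x.val z.val =
          some (linkEnc m n (D (idx x.val z.val) j)).flip :=
        mkCM_link_of_gt hxzG hzx
      have hh1 := hisHom j x.val y.val _ hl1
      have hh2 := hisHom j x.val z.val _ hl2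
      rw [hffyz j] at hh1
      rw [hh1] at hh2
      have := Option.some.inj hh2
      have := linkEnc_injective (Link.flip_injective this)
      rw [hq1, hq2] at this
      exact this
    have hgEq : gIdx x.val y.val = gIdx x.val z.val :=
      D.injective (funext fun j => hDj j)
    have : y.val = z.val :=
      hgIdx x.val y.val ⟨hxyG, hyx⟩ z.val ⟨hxzG, hzx⟩ hgEq
    exact hyz (Subtype.ext this)
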